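/- Let T be a nondegenerate triangle with vertices x₁, x₂, x₃ and barycentric coordinates λ₁, λ₂, λ₃. For indices {i,j,k} = {1,2,3}, define the edge bubble vector field ψₖ = 6 λᵢ λⱼ (xⱼ − xᵢ) and the Whitney form φₖ = λᵢ ∇λⱼ − λⱼ ∇λᵢ. Then ∫_T ψₖ · φₖ dx = (2/5)|T| for each k. -/

import Mathlib

open MeasureTheory
open scoped RealInnerProductSpace

namespace EdgeBubbleAux

open Set

noncomputable abbrev E2 := EuclideanSpace ℝ (Fin 2)

def Tri : Set (ℝ × ℝ) := {p | 0 ≤ p.1 ∧ 0 ≤ p.2 ∧ p.1 + p.2 ≤ 1}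

lemma Tri_meas : MeasurableSet Tri := by
  apply MeasurableSet.inter (measurableSet_le measurable_const measurable_fst)
  exact (measurableSet_le measurable_const measurable_snd).inter
    (measurableSet_le (measurable_fst.add measurable_snd) measurable_const)

lemma Tri_compact : IsCompact Tri := by
  have hsub : Tri ⊆ Icc (0,0) (1,1) := by
    rintro ⟨a,b⟩ ⟨h1,h2,h3⟩
    constructor <;> constructor <;> simp_all <;> linarith
  have hcl : IsClosed Tri := by
    apply IsClosed.inter (isClosed_le continuous_const continuous_fst)
    exact (isClosed_le continuous_const continuous_snd).inter
      (isClosed_le (continuous_fst.add continuous_snd) continuous_const)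
  exact isCompact_Icc.of_isClosed_subset hcl hsub

lemma fubini_tri (f : ℝ × ℝ → ℝ) (hf : Continuous f) :
    ∫ p in Tri, f p = ∫ x in Icc (0:ℝ) 1, ∫ y in Icc (0:ℝ) (1-x), f (x, y) := by
  have hint : Integrable (Tri.indicator f) := by
    rw [integrable_indicator_iff Tri_meas]
    exact hf.continuousOn.integrableOn_compact Tri_compact
  rw [← integral_indicator Tri_meas, Measure.volume_eq_prod,
    integral_prod _ (by rwa [← Measure.volume_eq_prod])]
  have key : ∀ x : ℝ, (∫ y, Tri.indicator f (x, y)) =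
      (Icc (0:ℝ) 1).indicator (fun x => ∫ y in Icc (0:ℝ) (1-x), f (x, y)) x := by
    intro x
    have hslice : ∀ y, Tri.indicator f (x, y) =
        ({y : ℝ | (x, y) ∈ Tri}).indicator (fun y => f (x, y)) y := by
      intro y; rfl
    simp_rw [hslice]
    by_cases hx0 : 0 ≤ x
    · have : {y : ℝ | (x, y) ∈ Tri} = Icc 0 (1 - x) := by
        ext y; simp [Tri, hx0]; intro; constructor <;> intro <;> linarith
      rw [this, integral_indicator measurableSet_Icc]
      by_cases hx1 : x ≤ 1
      · rw [Set.indicator_of_mem (Set.mem_Icc.2 ⟨hx0, hx1⟩)]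
      · rw [Set.indicator_of_notMem (by simp [hx1])]
        rw [Set.Icc_eq_empty (by simp; linarith)]
        simp
    · have : {y : ℝ | (x, y) ∈ Tri} = ∅ := by
        ext y; simp [Tri]; intro h; exact absurd h hx0
      rw [this]; simp [Set.indicator_of_notMem (by simp; intro h; linarith : x ∉ Icc (0:ℝ) 1)]
  simp_rw [key]
  rw [integral_indicator measurableSet_Icc]

lemma tri_vol : (volume Tri).toReal = 1/2 := by
  have h1 : ∫ p in Tri, (1:ℝ) = (volume Tri).toReal := by
    rw [setIntegral_const]; simp; rfl
  rw [← h1, fubini_tri _ continuous_const]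
  have h2 : ∀ x ∈ Icc (0:ℝ) 1, (∫ _y in Icc (0:ℝ) (1-x), (1:ℝ)) = 1 - x := by
    intro x hx
    rw [setIntegral_const, smul_eq_mul, mul_one, Real.volume_real_Icc,
      max_eq_left (by linarith [hx.2])]
    ring
  rw [setIntegral_congr_fun measurableSet_Icc h2,
    integral_Icc_eq_integral_Ioc, ← intervalIntegral.integral_of_le zero_le_one]
  have h : ∀ y ∈ Set.uIcc (0:ℝ) 1, HasDerivAt (fun y => y - y^2/2) (1-y) y := by
    intro y _
    have := (hasDerivAt_id y).sub ((hasDerivAt_pow 2 y).div_const 2)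
    exact this.congr_deriv (by norm_num)
  rw [intervalIntegral.integral_eq_sub_of_hasDerivAt h
    (Continuous.intervalIntegrable (by continuity) _ _)]
  norm_num

lemma tri_poly : ∫ p in Tri, 6 * p.1 * p.2 * (p.1 + p.2) = 1/5 := by
  rw [fubini_tri _ (by continuity)]
  have h2 : ∀ x ∈ Icc (0:ℝ) 1, (∫ y in Icc (0:ℝ) (1-x), 6*x*y*(x+y)) =
      3*x^2*(1-x)^2 + 2*x*(1-x)^3 := by
    intro x hx
    rw [integral_Icc_eq_integral_Ioc, ← intervalIntegral.integral_of_le (by linarith [hx.2])]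
    have h : ∀ y ∈ Set.uIcc (0:ℝ) (1-x),
        HasDerivAt (fun y => 3*x^2*y^2 + 2*x*y^3) (6*x*y*(x+y)) y := by
      intro y _
      have := ((hasDerivAt_pow 2 y).const_mul (3*x^2)).add ((hasDerivAt_pow 3 y).const_mul (2*x))
      exact this.congr_deriv (by norm_num; ring)
    rw [intervalIntegral.integral_eq_sub_of_hasDerivAt h
      (Continuous.intervalIntegrable (by continuity) _ _)]
    ring
  rw [setIntegral_congr_fun measurableSet_Icc h2,
    integral_Icc_eq_integral_Ioc, ← intervalIntegral.integral_of_le zero_le_one]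
  have h : ∀ y ∈ Set.uIcc (0:ℝ) 1, HasDerivAt (fun y => y^5/5 - y^3 + y^2)
      (3*y^2*(1-y)^2 + 2*y*(1-y)^3) y := by
    intro y _
    have := (((hasDerivAt_pow 5 y).div_const 5).sub (hasDerivAt_pow 3 y)).add (hasDerivAt_pow 2 y)
    exact this.congr_deriv (by norm_num; ring)
  rw [intervalIntegral.integral_eq_sub_of_hasDerivAt h
    (Continuous.intervalIntegrable (by continuity) _ _)]
  norm_num

noncomputable def phi : E2 ≃ᵐ (ℝ × ℝ) :=
  (MeasurableEquiv.toLp 2 (Fin 2 → ℝ)).symm.trans (MeasurableEquiv.piFinTwo fun _ => ℝ)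

lemma phi_mp : MeasurePreserving phi volume volume :=
  (volume_preserving_piFinTwo fun _ => ℝ).comp
    (EuclideanSpace.volume_preserving_symm_measurableEquiv_toLp (Fin 2))

noncomputable def Dlt : Set E2 := phi ⁻¹' Tri

lemma Dlt_meas : MeasurableSet Dlt := Tri_meas.preimage phi.measurable

lemma Dlt_mem (u : E2) : u ∈ Dlt ↔ 0 ≤ u 0 ∧ 0 ≤ u 1 ∧ u 0 + u 1 ≤ 1 := Iff.rfl

lemma Dlt_vol : (volume Dlt).toReal = 1/2 := by
  rw [Dlt, phi_mp.measure_preimage Tri_meas.nullMeasurableSet, tri_vol]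

lemma Dlt_poly : ∫ u in Dlt, 6 * u 0 * u 1 * (u 0 + u 1) = 1/5 := by
  have h := phi_mp.setIntegral_preimage_emb phi.measurableEmbedding
    (fun p => 6 * p.1 * p.2 * (p.1 + p.2)) Tri
  rw [Dlt]
  rw [show (fun u : E2 => 6 * u 0 * u 1 * (u 0 + u 1)) =
    (fun p : ℝ × ℝ => 6 * p.1 * p.2 * (p.1 + p.2)) ∘ phi from rfl] at *
  exact h.trans tri_poly

noncomputable def e0 : E2 := EuclideanSpace.single 0 1
noncomputable def e1 : E2 := EuclideanSpace.single 1 1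

lemma Dlt_hull : Dlt = convexHull ℝ {0, e0, e1} := by
  apply Set.Subset.antisymm
  · intro u hu
    obtain ⟨h0, h1, hs⟩ := (Dlt_mem u).1 hu
    have hrep : u = (1 - u 0 - u 1) • (0:E2) + (u 0 • e0 + u 1 • e1) := by
      ext m
      fin_cases m <;>
        simp [e0, e1, EuclideanSpace.single_apply, PiLp.add_apply, PiLp.smul_apply]
    rw [hrep]
    have key := (convex_convexHull ℝ ({0, e0, e1} : Set E2)).sum_mem
      (t := Finset.univ) (w := ![1 - u 0 - u 1, u 0, u 1]) (z := ![0, e0, e1])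
      (by intro m _; fin_cases m <;> simp <;> linarith)
      (by simp [Fin.sum_univ_three]; ring)
      (by intro m _; fin_cases m <;> exact subset_convexHull ℝ _ (by simp))
    simpa [Fin.sum_univ_three, add_assoc, Matrix.cons_val_zero, Matrix.cons_val_one,
      Matrix.head_cons] using key
  · apply convexHull_min
    · rintro p (rfl | rfl | rfl) <;>
        · refine (Dlt_mem _).2 ?_
          simp [e0, e1, EuclideanSpace.single_apply]
    · rintro u hu v hv a b ha hb hab
      obtain ⟨hu0, hu1, hus⟩ := (Dlt_mem u).1 hu
      obtain ⟨hv0, hv1, hvs⟩ := (Dlt_mem v).1 hv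
      refine (Dlt_mem _).2 ⟨?_, ?_, ?_⟩ <;>
        simp only [PiLp.add_apply, PiLp.smul_apply, smul_eq_mul] <;> nlinarith

noncomputable def Lmap (v1 v2 : E2) : E2 →ₗ[ℝ] E2 where
  toFun u := u 0 • v1 + u 1 • v2
  map_add' a b := by
    simp only [PiLp.add_apply, add_smul]; module
  map_smul' c a := by
    simp only [PiLp.smul_apply, smul_eq_mul, RingHom.id_apply, mul_smul, smul_add]

noncomputable def fAff (y0 v1 v2 : E2) : E2 →ᵃ[ℝ] E2 where
  toFun u := y0 + Lmap v1 v2 u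
  linear := Lmap v1 v2
  map_vadd' p v := by
    simp only [vadd_eq_add, map_add]; abel

lemma fAff_apply (y0 v1 v2 u : E2) :
    fAff y0 v1 v2 u = y0 + (u 0 • v1 + u 1 • v2) := rfl

end EdgeBubbleAux

open EdgeBubbleAux

/-- `∫_T ψₖ · φₖ dx = (2/5)|T|`, where `ψₖ = 6 λᵢ λⱼ (xⱼ - xᵢ)` is the edge bubble
field and `φₖ = λᵢ ∇λⱼ - λⱼ ∇λᵢ` the Whitney form on the edge opposite vertex `xₖ`. -/
theorem edge_bubble_whitney_diagonal (x : Fin 3 → EuclideanSpace ℝ (Fin 2))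
    (hx : AffineIndependent ℝ x)
    (lam : Fin 3 → (EuclideanSpace ℝ (Fin 2) →ᵃ[ℝ] ℝ))
    (hlam : ∀ i j, lam i (x j) = if i = j then 1 else 0)
    (g : Fin 3 → EuclideanSpace ℝ (Fin 2))
    (hg : ∀ i p, lam i p = lam i 0 + ⟪g i, p⟫)
    (i j k : Fin 3) (hij : i ≠ j) (hik : i ≠ k) (hjk : j ≠ k) :
    ∫ p in convexHull ℝ (Set.range x),
        ⟪(6 * lam i p * lam j p) • (x j - x i),
          lam i p • g j - lam j p • g i⟫ =
      2 / 5 * (volume (convexHull ℝ (Set.range x))).toReal := by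
  have hgdiff : ∀ m (p q : E2), ⟪g m, p - q⟫ = lam m p - lam m q := by
    intro m p q
    have h1 := hg m p; have h2 := hg m q
    rw [inner_sub_right]; linarith
  have hinnj : ⟪x j - x i, g j⟫ = 1 := by
    rw [real_inner_comm, hgdiff j (x j) (x i), hlam, hlam]
    simp [Ne.symm hij]
  have hinni : ⟪x j - x i, g i⟫ = -1 := by
    rw [real_inner_comm, hgdiff i (x j) (x i), hlam, hlam]
    simp [hij]
  have hexp : ∀ p : EuclideanSpace ℝ (Fin 2),
      ⟪(6 * lam i p * lam j p) • (x j - x i), lam i p • g j - lam j p • g i⟫ =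
      6 * lam i p * lam j p * (lam i p + lam j p) := by
    intro p
    simp only [inner_sub_right, real_inner_smul_left, real_inner_smul_right, hinnj, hinni]
    ring
  simp only [hexp]
  -- change of variables setup
  set v1 : E2 := x i - x k with hv1
  set v2 : E2 := x j - x k with hv2
  set f : E2 →ᵃ[ℝ] E2 := fAff (x k) v1 v2 with hf
  have hlam_f : ∀ (m : Fin 3) (u : E2),
      lam m (f u) = lam m (x k) + u 0 * (lam m (x i) - lam m (x k))
        + u 1 * (lam m (x j) - lam m (x k)) := by
    intro m u
    have hd := hgdiff m (f u) (x k)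
    have hsub : f u - x k = u 0 • v1 + u 1 • v2 := by
      rw [hf, fAff_apply]; abel
    rw [hsub, inner_add_right, real_inner_smul_right, real_inner_smul_right,
      hv1, hv2, hgdiff m (x i) (x k), hgdiff m (x j) (x k)] at hd
    linarith
  have hlam_fi : ∀ u : E2, lam i (f u) = u 0 := by
    intro u
    rw [hlam_f i u, hlam, hlam, hlam]
    simp [hij, hik]
  have hlam_fj : ∀ u : E2, lam j (f u) = u 1 := by
    intro u
    rw [hlam_f j u, hlam, hlam, hlam]
    simp [Ne.symm hij, hjk]
  -- image of the reference simplex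
  have himg : ⇑f '' Dlt = convexHull ℝ (Set.range x) := by
    rw [Dlt_hull, AffineMap.image_convexHull]
    congr 1
    rw [Set.image_insert_eq, Set.image_insert_eq, Set.image_singleton]
    have f0 : f (0 : E2) = x k := by
      rw [hf, fAff_apply]; simp
    have fe0 : f e0 = x i := by
      rw [hf, fAff_apply]
      simp [e0, EuclideanSpace.single_apply, hv1]
    have fe1 : f e1 = x j := by
      rw [hf, fAff_apply]
      simp [e1, EuclideanSpace.single_apply, hv2]
    rw [f0, fe0, fe1]
    have hm : ∀ m : Fin 3, m = i ∨ m = j ∨ m = k := by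
      have hd : ∀ (i j k m : Fin 3), i ≠ j → i ≠ k → j ≠ k → (m = i ∨ m = j ∨ m = k) := by decide
      exact fun m => hd i j k m hij hik hjk
    ext p
    constructor
    · rintro (rfl | rfl | rfl) <;> exact Set.mem_range_self _
    · rintro ⟨m, rfl⟩
      rcases hm m with rfl | rfl | rfl <;> simp
  -- injectivity
  have hinj : Set.InjOn (⇑f) Dlt := by
    intro u _ v _ huv
    have h0 : u 0 = v 0 := by rw [← hlam_fi u, ← hlam_fi v, huv]
    have h1 : u 1 = v 1 := by rw [← hlam_fj u, ← hlam_fj v, huv]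
    ext m
    fin_cases m
    · exact h0
    · exact h1
  -- derivative
  set Lc : E2 →L[ℝ] E2 := LinearMap.toContinuousLinearMap (Lmap v1 v2) with hLc
  have hder : ∀ u ∈ Dlt, HasFDerivWithinAt (⇑f) Lc Dlt u := by
    intro u _
    exact ((Lc.hasFDerivAt).const_add (x k)).hasFDerivWithinAt
  have hdet : Lc.det = LinearMap.det (Lmap v1 v2) := rfl
  rw [← himg,
    integral_image_eq_integral_abs_det_fderiv_smul volume Dlt_meas hder hinj
      (fun p => 6 * lam i p * lam j p * (lam i p + lam j p))]
  simp only [hlam_fi, hlam_fj, smul_eq_mul, hdet]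
  rw [integral_const_mul, Dlt_poly]
  -- volume computation
  have hvol : (volume (⇑f '' Dlt)).toReal = |LinearMap.det (Lmap v1 v2)| * (1/2) := by
    have himg2 : ⇑f '' Dlt = (fun w => x k + w) '' (⇑(Lmap v1 v2) '' Dlt) := by
      rw [Set.image_image]; rfl
    rw [himg2, Set.image_add_left, measure_preimage_add,
      Measure.addHaar_image_linearMap, ENNReal.toReal_mul,
      ENNReal.toReal_ofReal (abs_nonneg _), Dlt_vol]
  rw [hvol]
  ring
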